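/- For all x, y ∈ ℝ with |x| ≤ 1, |y| ≤ 1 and all ρ ∈ ℝ with |ρ| < 1, one has ∑_{n=0}^{∞} ρ^n · U_n(x) · U_n(y) = (1 − ρ²) / w₂(x,y|ρ). -/

import Mathlib

open Polynomial

private lemma den_pos' {ρ c : ℝ} (hρ : |ρ| < 1) (hc : |c| ≤ 1) :
    0 < 1 - 2 * ρ * c + ρ ^ 2 := by
  obtain ⟨h1, h2⟩ := abs_lt.mp hρ
  obtain ⟨h3, h4⟩ := abs_le.mp hc
  have hcc : ρ * c < 1 := by
    have h5 : |ρ * c| < 1 := by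
      rw [abs_mul]
      calc |ρ| * |c| ≤ |ρ| * 1 := by gcongr
        _ = |ρ| := mul_one _
        _ < 1 := hρ
    exact (abs_lt.mp h5).2
  nlinarith [mul_pos (sub_pos.2 hcc) (sub_pos.2 hcc), mul_nonneg (sq_nonneg ρ)
    (by nlinarith : (0:ℝ) ≤ 1 - c ^ 2)]

private lemma W_eq (θ φ ρ : ℝ) :
    (1 - 2 * ρ * Real.cos (θ - φ) + ρ ^ 2) * (1 - 2 * ρ * Real.cos (θ + φ) + ρ ^ 2)
      = (1 - ρ ^ 2) ^ 2 - 4 * Real.cos θ * Real.cos φ * ρ * (1 + ρ ^ 2)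
          + 4 * ρ ^ 2 * (Real.cos θ ^ 2 + Real.cos φ ^ 2) := by
  have hs1 : Real.sin θ ^ 2 = 1 - Real.cos θ ^ 2 := Real.sin_sq θ
  have hs2 : Real.sin φ ^ 2 = 1 - Real.cos φ ^ 2 := Real.sin_sq φ
  rw [Real.cos_sub, Real.cos_add]
  linear_combination (-4 * ρ ^ 2 * Real.sin φ ^ 2) * hs1
    + (4 * ρ ^ 2 * (Real.cos θ ^ 2 - 1)) * hs2

private lemma W_pos {x y ρ : ℝ} (hρ : |ρ| < 1) (hx : |x| ≤ 1) (hy : |y| ≤ 1) :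
    0 < (1 - ρ ^ 2) ^ 2 - 4 * x * y * ρ * (1 + ρ ^ 2) + 4 * ρ ^ 2 * (x ^ 2 + y ^ 2) := by
  obtain ⟨hx1, hx2⟩ := abs_le.mp hx
  obtain ⟨hy1, hy2⟩ := abs_le.mp hy
  have hcx : Real.cos (Real.arccos x) = x := Real.cos_arccos hx1 hx2
  have hcy : Real.cos (Real.arccos y) = y := Real.cos_arccos hy1 hy2
  rw [← hcx, ← hcy, ← W_eq]
  exact mul_pos (den_pos' hρ (Real.abs_cos_le_one _)) (den_pos' hρ (Real.abs_cos_le_one _))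

private lemma exp_re' (t : ℝ) : (Complex.exp ((t : ℂ) * Complex.I)).re = Real.cos t := by
  rw [Complex.exp_mul_I]
  simp [Complex.add_re, Complex.mul_re, Complex.I_re, Complex.I_im,
    Complex.cos_ofReal_re, Complex.sin_ofReal_im]

private lemma exp_im' (t : ℝ) : (Complex.exp ((t : ℂ) * Complex.I)).im = Real.sin t := by
  rw [Complex.exp_mul_I]
  simp [Complex.add_im, Complex.mul_im, Complex.I_re, Complex.I_im,
    Complex.sin_ofReal_re, Complex.cos_ofReal_im]

private lemma hasSum_geom_cos (ρ α : ℝ) (hρ : |ρ| < 1) :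
    HasSum (fun n : ℕ => ρ ^ n * Real.cos ((n + 1) * α))
      ((Real.cos α - ρ) / (1 - 2 * ρ * Real.cos α + ρ ^ 2)) := by
  set z : ℂ := (ρ : ℂ) * Complex.exp (α * Complex.I) with hzdef
  have hzn : ‖z‖ < 1 := by
    rw [hzdef, norm_mul, Complex.norm_real, Real.norm_eq_abs,
      Complex.norm_exp_ofReal_mul_I, mul_one]
    exact hρ
  have hgeo := (hasSum_geometric_of_norm_lt_one hzn).mul_right (Complex.exp (α * Complex.I))
  have hre := Complex.hasSum_re hgeo
  have hterm : ∀ n : ℕ, (z ^ n * Complex.exp (α * Complex.I)).re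
      = ρ ^ n * Real.cos ((n + 1) * α) := by
    intro n
    have : z ^ n * Complex.exp (α * Complex.I)
        = (ρ : ℂ) ^ n * Complex.exp ((((n : ℝ) + 1) * α : ℝ) * Complex.I) := by
      rw [hzdef, mul_pow, ← Complex.exp_nat_mul, mul_assoc, ← Complex.exp_add]
      congr 2
      push_cast
      ring
    rw [this, ← Complex.ofReal_pow, Complex.re_ofReal_mul, exp_re']
  have hval : ((1 - z)⁻¹ * Complex.exp (α * Complex.I)).re
      = (Real.cos α - ρ) / (1 - 2 * ρ * Real.cos α + ρ ^ 2) := by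
    have hD : (0:ℝ) < 1 - 2 * ρ * Real.cos α + ρ ^ 2 :=
      den_pos' hρ (Real.abs_cos_le_one α)
    have h1 : (1 - z)⁻¹ * Complex.exp (α * Complex.I) = Complex.exp (α * Complex.I) / (1 - z) := by
      ring
    rw [h1, Complex.div_re]
    have hre1 : (Complex.exp (α * Complex.I)).re = Real.cos α := exp_re' α
    have him1 : (Complex.exp (α * Complex.I)).im = Real.sin α := exp_im' α
    have hre2 : ((1:ℂ) - z).re = 1 - ρ * Real.cos α := by
      rw [hzdef, Complex.sub_re, Complex.one_re, Complex.mul_re, Complex.ofReal_re,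
        Complex.ofReal_im, exp_re', exp_im']
      ring
    have him2 : ((1:ℂ) - z).im = -(ρ * Real.sin α) := by
      rw [hzdef, Complex.sub_im, Complex.one_im, Complex.mul_im, Complex.ofReal_re,
        Complex.ofReal_im, exp_re', exp_im']
      ring
    have hnsq : Complex.normSq (1 - z) = 1 - 2 * ρ * Real.cos α + ρ ^ 2 := by
      rw [Complex.normSq_apply, hre2, him2]
      have := Real.sin_sq_add_cos_sq α
      nlinarith [this]
    rw [hre1, him1, hre2, him2, hnsq]
    have hs : Real.sin α ^ 2 = 1 - Real.cos α ^ 2 := Real.sin_sq α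
    rw [← add_div]
    congr 1
    linear_combination (-ρ) * hs
  have hfun : (fun n : ℕ => (z ^ n * Complex.exp (α * Complex.I)).re)
      = fun n : ℕ => ρ ^ n * Real.cos ((n + 1) * α) := funext hterm
  rw [hfun, hval] at hre
  exact hre

private lemma hasSum_sin_sin (θ φ ρ : ℝ) (hρ : |ρ| < 1) :
    HasSum (fun n : ℕ => ρ ^ n * Real.sin ((n + 1) * θ) * Real.sin ((n + 1) * φ))
      (Real.sin θ * Real.sin φ * (1 - ρ ^ 2) /
        ((1 - ρ ^ 2) ^ 2 - 4 * Real.cos θ * Real.cos φ * ρ * (1 + ρ ^ 2)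
          + 4 * ρ ^ 2 * (Real.cos θ ^ 2 + Real.cos φ ^ 2))) := by
  have hA := hasSum_geom_cos ρ (θ - φ) hρ
  have hB := hasSum_geom_cos ρ (θ + φ) hρ
  have h := (hA.sub hB).div_const 2
  have hterm : ∀ n : ℕ,
      (ρ ^ n * Real.cos ((n + 1) * (θ - φ)) - ρ ^ n * Real.cos ((n + 1) * (θ + φ))) / 2
        = ρ ^ n * Real.sin ((n + 1) * θ) * Real.sin ((n + 1) * φ) := by
    intro n
    have h1 : ((n:ℝ) + 1) * (θ - φ) = ((n:ℝ) + 1) * θ - ((n:ℝ) + 1) * φ := by ring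
    have h2 : ((n:ℝ) + 1) * (θ + φ) = ((n:ℝ) + 1) * θ + ((n:ℝ) + 1) * φ := by ring
    rw [h1, h2, Real.cos_sub, Real.cos_add]
    ring
  have hval : ((Real.cos (θ - φ) - ρ) / (1 - 2 * ρ * Real.cos (θ - φ) + ρ ^ 2)
      - (Real.cos (θ + φ) - ρ) / (1 - 2 * ρ * Real.cos (θ + φ) + ρ ^ 2)) / 2
      = Real.sin θ * Real.sin φ * (1 - ρ ^ 2) /
        ((1 - ρ ^ 2) ^ 2 - 4 * Real.cos θ * Real.cos φ * ρ * (1 + ρ ^ 2)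
          + 4 * ρ ^ 2 * (Real.cos θ ^ 2 + Real.cos φ ^ 2)) := by
    have hD1 : (0:ℝ) < 1 - 2 * ρ * Real.cos (θ - φ) + ρ ^ 2 :=
      den_pos' hρ (Real.abs_cos_le_one _)
    have hD2 : (0:ℝ) < 1 - 2 * ρ * Real.cos (θ + φ) + ρ ^ 2 :=
      den_pos' hρ (Real.abs_cos_le_one _)
    have hW := W_eq θ φ ρ
    have hAB : Real.cos (θ - φ) - Real.cos (θ + φ) = 2 * Real.sin θ * Real.sin φ := by
      rw [Real.cos_sub, Real.cos_add]; ring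
    rw [div_sub_div _ _ hD1.ne' hD2.ne']
    rw [← hW]
    have hnum : (Real.cos (θ - φ) - ρ) * (1 - 2 * ρ * Real.cos (θ + φ) + ρ ^ 2)
        - (1 - 2 * ρ * Real.cos (θ - φ) + ρ ^ 2) * (Real.cos (θ + φ) - ρ)
        = (Real.cos (θ - φ) - Real.cos (θ + φ)) * (1 - ρ ^ 2) := by ring
    rw [hnum, hAB]
    field_simp
  have hfun : (fun n : ℕ =>
      (ρ ^ n * Real.cos ((n + 1) * (θ - φ)) - ρ ^ n * Real.cos ((n + 1) * (θ + φ))) / 2)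
      = fun n : ℕ => ρ ^ n * Real.sin ((n + 1) * θ) * Real.sin ((n + 1) * φ) := funext hterm
  rw [hfun, hval] at h
  exact h

private lemma abs_sin_nat_mul_le (n : ℕ) (t : ℝ) : |Real.sin (n * t)| ≤ n * |Real.sin t| := by
  induction n with
  | zero => simp
  | succ n ih =>
    push_cast
    have heq : ((n:ℝ) + 1) * t = (n:ℝ) * t + t := by ring
    rw [heq, Real.sin_add]
    have c1 : |Real.sin ((n:ℝ) * t) * Real.cos t| ≤ |Real.sin ((n:ℝ) * t)| := by
      rw [abs_mul]
      exact mul_le_of_le_one_right (abs_nonneg _) (Real.abs_cos_le_one t)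
    have c2 : |Real.cos ((n:ℝ) * t) * Real.sin t| ≤ |Real.sin t| := by
      rw [abs_mul]
      exact mul_le_of_le_one_left (abs_nonneg _) (Real.abs_cos_le_one _)
    have habs := abs_add_le (Real.sin ((n:ℝ) * t) * Real.cos t) (Real.cos ((n:ℝ) * t) * Real.sin t)
    linarith

private lemma U_bound (n : ℕ) : ∀ x : ℝ, |x| ≤ 1 →
    |(Chebyshev.U ℝ (n : ℤ)).eval x| ≤ (n : ℝ) + 1 := by
  have hclosed : IsClosed {x : ℝ | |(Chebyshev.U ℝ (n : ℤ)).eval x| ≤ (n : ℝ) + 1} :=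
    isClosed_le ((Chebyshev.U ℝ (n : ℤ)).continuous.abs) continuous_const
  have hIoo : Set.Ioo (-1 : ℝ) 1 ⊆ {x : ℝ | |(Chebyshev.U ℝ (n : ℤ)).eval x| ≤ (n : ℝ) + 1} := by
    intro x hx
    obtain ⟨h1, h2⟩ := hx
    set θ := Real.arccos x with hθ
    have hcos : Real.cos θ = x := Real.cos_arccos h1.le h2.le
    have hsin : 0 < Real.sin θ := by
      rw [hθ, Real.sin_arccos]
      exact Real.sqrt_pos.mpr (by nlinarith)
    have hU := Polynomial.Chebyshev.U_real_cos θ (n : ℤ)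
    rw [hcos] at hU
    have hb : |Real.sin ((((n : ℤ) : ℝ) + 1) * θ)| ≤ ((n : ℝ) + 1) * |Real.sin θ| := by
      have := abs_sin_nat_mul_le (n + 1) θ
      push_cast at this ⊢
      exact this
    have : |(Chebyshev.U ℝ (n : ℤ)).eval x| * Real.sin θ ≤ ((n : ℝ) + 1) * Real.sin θ := by
      calc |(Chebyshev.U ℝ (n : ℤ)).eval x| * Real.sin θ
          = |(Chebyshev.U ℝ (n : ℤ)).eval x| * |Real.sin θ| := by rw [abs_of_pos hsin]
        _ = |(Chebyshev.U ℝ (n : ℤ)).eval x * Real.sin θ| := (abs_mul _ _).symm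
        _ = |Real.sin ((((n : ℤ) : ℝ) + 1) * θ)| := by rw [hU]
        _ ≤ ((n : ℝ) + 1) * |Real.sin θ| := hb
        _ = ((n : ℝ) + 1) * Real.sin θ := by rw [abs_of_pos hsin]
    exact le_of_mul_le_mul_right this hsin
  intro x hx
  obtain ⟨h1, h2⟩ := abs_le.mp hx
  have : x ∈ closure (Set.Ioo (-1 : ℝ) 1) := by
    rw [closure_Ioo (by norm_num : (-1:ℝ) ≠ 1)]
    exact ⟨h1, h2⟩
  exact hclosed.closure_subset_iff.mpr hIoo this

private lemma interior_case {x y ρ : ℝ} (hx : |x| < 1) (hy : |y| < 1) (hρ : |ρ| < 1) :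
    HasSum (fun n : ℕ => ρ ^ n * (Chebyshev.U ℝ (n : ℤ)).eval x * (Chebyshev.U ℝ (n : ℤ)).eval y)
      ((1 - ρ ^ 2) /
        ((1 - ρ ^ 2) ^ 2 - 4 * x * y * ρ * (1 + ρ ^ 2) + 4 * ρ ^ 2 * (x ^ 2 + y ^ 2))) := by
  obtain ⟨hx1, hx2⟩ := abs_lt.mp hx
  obtain ⟨hy1, hy2⟩ := abs_lt.mp hy
  set θ := Real.arccos x with hθdef
  set φ := Real.arccos y with hφdef
  have hcx : Real.cos θ = x := Real.cos_arccos hx1.le hx2.le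
  have hcy : Real.cos φ = y := Real.cos_arccos hy1.le hy2.le
  have hsx : 0 < Real.sin θ := by
    rw [hθdef, Real.sin_arccos]; exact Real.sqrt_pos.mpr (by nlinarith)
  have hsy : 0 < Real.sin φ := by
    rw [hφdef, Real.sin_arccos]; exact Real.sqrt_pos.mpr (by nlinarith)
  have h := (hasSum_sin_sin θ φ ρ hρ).div_const (Real.sin θ * Real.sin φ)
  have hterm : ∀ n : ℕ,
      ρ ^ n * Real.sin ((n + 1) * θ) * Real.sin ((n + 1) * φ) / (Real.sin θ * Real.sin φ)
        = ρ ^ n * (Chebyshev.U ℝ (n : ℤ)).eval x * (Chebyshev.U ℝ (n : ℤ)).eval y := by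
    intro n
    have hUx := Polynomial.Chebyshev.U_real_cos θ (n : ℤ)
    have hUy := Polynomial.Chebyshev.U_real_cos φ (n : ℤ)
    rw [hcx] at hUx
    rw [hcy] at hUy
    push_cast at hUx hUy
    rw [← hUx, ← hUy]
    field_simp
  have hval : Real.sin θ * Real.sin φ * (1 - ρ ^ 2) /
        ((1 - ρ ^ 2) ^ 2 - 4 * Real.cos θ * Real.cos φ * ρ * (1 + ρ ^ 2)
          + 4 * ρ ^ 2 * (Real.cos θ ^ 2 + Real.cos φ ^ 2)) / (Real.sin θ * Real.sin φ)
      = (1 - ρ ^ 2) /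
        ((1 - ρ ^ 2) ^ 2 - 4 * x * y * ρ * (1 + ρ ^ 2) + 4 * ρ ^ 2 * (x ^ 2 + y ^ 2)) := by
    rw [hcx, hcy]
    have hW : (0:ℝ) < (1 - ρ ^ 2) ^ 2 - 4 * x * y * ρ * (1 + ρ ^ 2) + 4 * ρ ^ 2 * (x ^ 2 + y ^ 2) :=
      W_pos hρ hx.le hy.le
    field_simp
  have hfun : (fun n : ℕ =>
      ρ ^ n * Real.sin ((n + 1) * θ) * Real.sin ((n + 1) * φ) / (Real.sin θ * Real.sin φ))
      = fun n : ℕ => ρ ^ n * (Chebyshev.U ℝ (n : ℤ)).eval x * (Chebyshev.U ℝ (n : ℤ)).eval y :=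
    funext hterm
  rw [hfun, hval] at h
  exact h

theorem poisson_mehler_chebyshev_U (x y ρ : ℝ) (hx : |x| ≤ 1) (hy : |y| ≤ 1) (hρ : |ρ| < 1) :
    ∑' n : ℕ, ρ ^ n * (Chebyshev.U ℝ (n : ℤ)).eval x * (Chebyshev.U ℝ (n : ℤ)).eval y =
      (1 - ρ ^ 2) /
        ((1 - ρ ^ 2) ^ 2 - 4 * x * y * ρ * (1 + ρ ^ 2) + 4 * ρ ^ 2 * (x ^ 2 + y ^ 2)) := by
  set F : ℝ × ℝ → ℝ := fun p =>
    ∑' n : ℕ, ρ ^ n * (Chebyshev.U ℝ (n : ℤ)).eval p.1 * (Chebyshev.U ℝ (n : ℤ)).eval p.2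
    with hF
  set G : ℝ × ℝ → ℝ := fun p =>
    (1 - ρ ^ 2) /
      ((1 - ρ ^ 2) ^ 2 - 4 * p.1 * p.2 * ρ * (1 + ρ ^ 2) + 4 * ρ ^ 2 * (p.1 ^ 2 + p.2 ^ 2))
    with hG
  set K : Set (ℝ × ℝ) := Set.Icc (-1 : ℝ) 1 ×ˢ Set.Icc (-1 : ℝ) 1 with hK
  set Uo : Set (ℝ × ℝ) := Set.Ioo (-1 : ℝ) 1 ×ˢ Set.Ioo (-1 : ℝ) 1 with hUo
  have hUK : Uo ⊆ K := Set.prod_mono Set.Ioo_subset_Icc_self Set.Ioo_subset_Icc_self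
  have hEq : ∀ p ∈ Uo, F p = G p := by
    rintro ⟨a, b⟩ ⟨ha, hb⟩
    exact (interior_case (abs_lt.mpr ha) (abs_lt.mpr hb) hρ).tsum_eq
  -- continuity of F on K
  have hsumu : Summable (fun n : ℕ => ((n : ℝ) + 1) ^ 2 * |ρ| ^ n) := by
    have h1 : ‖|ρ|‖ < 1 := by rwa [Real.norm_eq_abs, abs_abs]
    have := (summable_pow_mul_geometric_of_norm_lt_one 2 h1).add
      (((summable_pow_mul_geometric_of_norm_lt_one 1 h1).mul_left 2).add
        (summable_geometric_of_norm_lt_one h1))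
    refine this.congr fun n => ?_
    push_cast
    ring
  have hFcont : ContinuousOn F K := by
    refine continuousOn_tsum (fun n => ?_) hsumu (fun n p hp => ?_)
    · exact ((continuous_const.mul ((Chebyshev.U ℝ (n : ℤ)).continuous.comp
        continuous_fst)).mul
        ((Chebyshev.U ℝ (n : ℤ)).continuous.comp continuous_snd)).continuousOn
    · obtain ⟨hp1, hp2⟩ := hp
      have h1 : |p.1| ≤ 1 := abs_le.mpr hp1
      have h2 : |p.2| ≤ 1 := abs_le.mpr hp2
      have b1 := U_bound n p.1 h1
      have b2 := U_bound n p.2 h2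
      rw [Real.norm_eq_abs, abs_mul, abs_mul, abs_pow]
      calc |ρ| ^ n * |(Chebyshev.U ℝ (n : ℤ)).eval p.1| * |(Chebyshev.U ℝ (n : ℤ)).eval p.2|
          ≤ |ρ| ^ n * ((n : ℝ) + 1) * ((n : ℝ) + 1) := by gcongr
        _ = ((n : ℝ) + 1) ^ 2 * |ρ| ^ n := by ring
  have hGcont : ContinuousOn G K := by
    refine ContinuousOn.div continuousOn_const (by fun_prop) ?_
    rintro ⟨a, b⟩ ⟨ha, hb⟩
    exact (W_pos hρ (abs_le.mpr ha) (abs_le.mpr hb)).ne'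
  have hp : ((x, y) : ℝ × ℝ) ∈ K := ⟨abs_le.mp hx, abs_le.mp hy⟩
  have hpcl : ((x, y) : ℝ × ℝ) ∈ closure Uo := by
    rw [hUo, closure_prod_eq, closure_Ioo (by norm_num : (-1:ℝ) ≠ 1)]
    exact ⟨abs_le.mp hx, abs_le.mp hy⟩
  have hne : (nhdsWithin ((x, y) : ℝ × ℝ) Uo).NeBot :=
    mem_closure_iff_nhdsWithin_neBot.mp hpcl
  have t1 : Filter.Tendsto F (nhdsWithin (x, y) Uo) (nhds (F (x, y))) :=
    (hFcont (x, y) hp).mono_left (nhdsWithin_mono _ hUK)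
  have t2 : Filter.Tendsto G (nhdsWithin (x, y) Uo) (nhds (G (x, y))) :=
    (hGcont (x, y) hp).mono_left (nhdsWithin_mono _ hUK)
  have t1' : Filter.Tendsto G (nhdsWithin (x, y) Uo) (nhds (F (x, y))) :=
    t1.congr' (Filter.eventually_iff_exists_mem.mpr
      ⟨Uo, self_mem_nhdsWithin, fun q hq => (hEq q hq)⟩)
  have : F (x, y) = G (x, y) := tendsto_nhds_unique t1' t2
  simpa [hF, hG] using this
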